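/- There is a bijection between fixed-point-free involutions of S_n (n even) and oscillating tableaux of length n. -/
import Mathlib


/-- An oscillating tableau of length n: a sequence of partitions beginning and ending at ∅
in which consecutive partitions differ by exactly one box (added or removed). -/
def IsOscillatingTableau (n : ℕ) (μ : Fin (n + 1) → YoungDiagram) : Prop :=
  μ 0 = ⊥ ∧ μ (Fin.last n) = ⊥ ∧
  ∀ i : Fin n,
    (μ i.castSucc ≤ μ i.succ ∧ (μ i.succ).card = (μ i.castSucc).card + 1) ∨
    (μ i.succ ≤ μ i.castSucc ∧ (μ i.castSucc).card = (μ i.succ).card + 1)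

open Finset

namespace OscProof
open YoungDiagram
open scoped Classical

/-- `m` covers `l` in Young's lattice. -/
def Cov (l m : YoungDiagram) : Prop := l ≤ m ∧ m.card = l.card + 1

lemma cov_exists_cell {l m : YoungDiagram} (h : Cov l m) :
    ∃ c, c ∉ l.cells ∧ m.cells = insert c l.cells := by
  have hsub : l.cells ⊆ m.cells := YoungDiagram.cells_subset_iff.mpr h.1
  have hcard : (m.cells \ l.cells).card = 1 := by
    have h2 : m.cells.card = l.cells.card + 1 := h.2
    rw [Finset.card_sdiff_of_subset hsub, h2]; omega
  obtain ⟨c, hc⟩ := Finset.card_eq_one.mp hcard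
  refine ⟨c, ?_, ?_⟩
  · have : c ∈ m.cells \ l.cells := hc ▸ Finset.mem_singleton_self c
    exact (Finset.mem_sdiff.mp this).2
  · apply Finset.Subset.antisymm
    · intro x hx
      by_cases hxl : x ∈ l.cells
      · exact Finset.mem_insert_of_mem hxl
      · have : x ∈ m.cells \ l.cells := Finset.mem_sdiff.mpr ⟨hx, hxl⟩
        rw [hc, Finset.mem_singleton] at this
        rw [this]; exact Finset.mem_insert_self c _
    · intro x hx
      rcases Finset.mem_insert.mp hx with rfl | hx
      · have : x ∈ m.cells \ l.cells := hc ▸ Finset.mem_singleton_self x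
        exact (Finset.mem_sdiff.mp this).1
      · exact hsub hx

lemma not_mem_rowLen (l : YoungDiagram) (i : ℕ) : (i, l.rowLen i) ∉ l := by
  simp [YoungDiagram.mem_iff_lt_rowLen]

/-- Characterization of upper covers. -/
lemma cov_up_iff {l m : YoungDiagram} :
    Cov l m ↔ ∃ i, (i = 0 ∨ l.rowLen i < l.rowLen (i - 1)) ∧
      m.cells = insert (i, l.rowLen i) l.cells := by
  constructor
  · rintro h
    obtain ⟨⟨i, j⟩, hc, hcells⟩ := cov_exists_cell h
    have hmem : (i, j) ∈ m.cells := hcells ▸ Finset.mem_insert_self _ _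
    have hjge : l.rowLen i ≤ j := by
      by_contra hlt
      exact hc (YoungDiagram.mem_cells _ |>.mpr (YoungDiagram.mem_iff_lt_rowLen.mpr (by omega)))
    have hj : j = l.rowLen i := by
      by_contra hne
      have hlt : l.rowLen i < j := lt_of_le_of_ne hjge (fun h => hne h.symm)
      have h1 : (i, l.rowLen i) ∈ m.cells :=
        m.up_left_mem le_rfl (le_of_lt hlt) hmem
      rw [hcells, Finset.mem_insert] at h1
      rcases h1 with h1 | h1
      · exact hne (by injection h1 with h1 h2; omega)
      · exact not_mem_rowLen l i h1
    subst hj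
    refine ⟨i, ?_, hcells⟩
    rcases Nat.eq_zero_or_pos i with rfl | hi
    · exact Or.inl rfl
    · right
      have h1 : (i - 1, l.rowLen i) ∈ m.cells :=
        m.up_left_mem (by omega) le_rfl hmem
      rw [hcells, Finset.mem_insert] at h1
      rcases h1 with h1 | h1
      · exfalso; injection h1 with h1 h2; omega
      · exact YoungDiagram.mem_iff_lt_rowLen.mp h1
  · rintro ⟨i, hcond, hcells⟩
    have hnotmem : (i, l.rowLen i) ∉ l.cells := not_mem_rowLen l i
    have hle : l ≤ m := by
      rw [← YoungDiagram.cells_subset_iff, hcells]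
      exact Finset.subset_insert _ _
    refine ⟨hle, ?_⟩
    show m.cells.card = l.cells.card + 1
    rw [hcells, Finset.card_insert_of_notMem hnotmem]

/-- The insertion of an addable corner is a Young diagram. -/
lemma isLowerSet_insert {l : YoungDiagram} {i : ℕ}
    (hcond : i = 0 ∨ l.rowLen i < l.rowLen (i - 1)) :
    IsLowerSet (↑(insert (i, l.rowLen i) l.cells) : Set (ℕ × ℕ)) := by
  intro ⟨x, y⟩ ⟨a, b⟩ hab hx
  simp only [Finset.coe_insert, Set.mem_insert_iff, Finset.mem_coe] at hx ⊢
  obtain ⟨h1, h2⟩ : a ≤ x ∧ b ≤ y := ⟨hab.1, hab.2⟩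
  rcases hx with hx | hx
  · have hxi : x = i := congrArg Prod.fst hx
    have hyr : y = l.rowLen i := congrArg Prod.snd hx
    subst hxi; subst hyr
    by_cases hai : a = x
    · subst hai
      rcases Nat.lt_or_ge b (l.rowLen a) with hb | hb
      · exact Or.inr ((YoungDiagram.mem_cells _).mpr (YoungDiagram.mem_iff_lt_rowLen.mpr hb))
      · left
        have : b = l.rowLen a := le_antisymm h2 hb
        rw [this]
    · have hal : a < x := lt_of_le_of_ne h1 hai
      rcases hcond with rfl | hcond
      · omega
      · right
        have hmono : l.rowLen (x - 1) ≤ l.rowLen a := l.rowLen_anti a (x - 1) (by omega)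
        exact (YoungDiagram.mem_cells _).mpr (YoungDiagram.mem_iff_lt_rowLen.mpr (by omega))
  · right
    have := l.isLowerSet hab (by exact Finset.mem_coe.mpr hx)
    exact Finset.mem_coe.mp this


/-- Characterization of lower covers. -/
lemma cov_down_iff {p l : YoungDiagram} :
    Cov p l ↔ ∃ i, l.rowLen (i + 1) < l.rowLen i ∧
      p.cells = l.cells.erase (i, l.rowLen i - 1) := by
  constructor
  · rintro h
    obtain ⟨⟨i, j⟩, hc, hcells⟩ := cov_exists_cell h
    have hmem : (i, j) ∈ l.cells := hcells ▸ Finset.mem_insert_self _ _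
    have hjlt : j < l.rowLen i := YoungDiagram.mem_iff_lt_rowLen.mp ((YoungDiagram.mem_cells _).mp hmem)
    have hj : j = l.rowLen i - 1 := by
      by_contra hne
      have hlt : j + 1 < l.rowLen i := by omega
      have h1 : (i, j + 1) ∈ l.cells := (YoungDiagram.mem_cells _).mpr (YoungDiagram.mem_iff_lt_rowLen.mpr hlt)
      rw [hcells, Finset.mem_insert] at h1
      rcases h1 with h1 | h1
      · injection h1 with h1 h2; omega
      · -- (i, j+1) ∈ p but (i, j) ∉ p contradicts p lower
        exact hc (Finset.mem_coe.mp (p.isLowerSet (Prod.mk_le_mk.mpr ⟨le_refl i, by omega⟩) (Finset.mem_coe.mpr h1)))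
    subst hj
    refine ⟨i, ?_, ?_⟩
    · by_contra hge
      have heq : l.rowLen (i + 1) = l.rowLen i := le_antisymm (l.rowLen_anti i (i+1) (by omega)) (by omega)
      have h1 : (i + 1, l.rowLen i - 1) ∈ l.cells :=
        (YoungDiagram.mem_cells _).mpr (YoungDiagram.mem_iff_lt_rowLen.mpr (by omega))
      rw [hcells, Finset.mem_insert] at h1
      rcases h1 with h1 | h1
      · injection h1 with h1 h2; omega
      · exact hc (Finset.mem_coe.mp (p.isLowerSet (Prod.mk_le_mk.mpr ⟨by omega, le_refl _⟩) (Finset.mem_coe.mpr h1)))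
    · rw [hcells, Finset.erase_insert hc]
  · rintro ⟨i, hcond, hcells⟩
    have hrpos : 0 < l.rowLen i := by omega
    have hmem : (i, l.rowLen i - 1) ∈ l.cells :=
      (YoungDiagram.mem_cells _).mpr (YoungDiagram.mem_iff_lt_rowLen.mpr (by omega))
    have hle : p ≤ l := by
      rw [← YoungDiagram.cells_subset_iff, hcells]
      exact Finset.erase_subset _ _
    refine ⟨hle, ?_⟩
    show l.cells.card = p.cells.card + 1
    rw [hcells, Finset.card_erase_of_mem hmem]
    have : 0 < l.cells.card := Finset.card_pos.mpr ⟨_, hmem⟩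
    omega

/-- The erasure of a removable corner is a Young diagram. -/
lemma isLowerSet_erase {l : YoungDiagram} {i : ℕ}
    (hcond : l.rowLen (i + 1) < l.rowLen i) :
    IsLowerSet (↑(l.cells.erase (i, l.rowLen i - 1)) : Set (ℕ × ℕ)) := by
  intro ⟨x, y⟩ ⟨a, b⟩ hab hx
  simp only [Finset.coe_erase, Set.mem_diff, Finset.mem_coe, Set.mem_singleton_iff] at hx ⊢
  obtain ⟨hxl, hxne⟩ := hx
  obtain ⟨h1, h2⟩ : a ≤ x ∧ b ≤ y := ⟨hab.1, hab.2⟩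
  refine ⟨Finset.mem_coe.mp (l.isLowerSet hab (Finset.mem_coe.mpr hxl)), ?_⟩
  rintro hc
  have hai : a = i := congrArg Prod.fst hc
  have hbr : b = l.rowLen i - 1 := congrArg Prod.snd hc
  subst hai; subst hbr
  -- (x, y) ∈ l, (x,y) ≠ (a, r-1), a ≤ x, r-1 ≤ y
  have hylt : y < l.rowLen x := YoungDiagram.mem_iff_lt_rowLen.mp ((YoungDiagram.mem_cells _).mp hxl)
  rcases Nat.eq_or_lt_of_le h1 with rfl | hax
  · have : y = l.rowLen a - 1 := by omega
    exact hxne (by rw [this])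
  · have : l.rowLen x ≤ l.rowLen (a + 1) := l.rowLen_anti (a+1) x (by omega)
    omega


/-- Make a Young diagram from a finset of cells (junk value `⊥` if not a lower set). -/
noncomputable def toYD (s : Finset (ℕ × ℕ)) : YoungDiagram :=
  if h : IsLowerSet (↑s : Set (ℕ × ℕ)) then ⟨s, h⟩ else ⊥

lemma toYD_cells {s : Finset (ℕ × ℕ)} (h : IsLowerSet (↑s : Set (ℕ × ℕ))) :
    (toYD s).cells = s := by
  rw [toYD, dif_pos h]

/-- Rows where a cell can be added. -/
noncomputable def upIdx (l : YoungDiagram) : Finset ℕ :=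
  (Finset.range (l.colLen 0 + 1)).filter (fun i => i = 0 ∨ l.rowLen i < l.rowLen (i - 1))

/-- Rows where a cell can be removed. -/
noncomputable def downIdx (l : YoungDiagram) : Finset ℕ :=
  (Finset.range (l.colLen 0 + 1)).filter (fun i => l.rowLen (i + 1) < l.rowLen i)

noncomputable def upCell (l : YoungDiagram) (i : ℕ) : YoungDiagram :=
  toYD (insert (i, l.rowLen i) l.cells)

noncomputable def downCell (l : YoungDiagram) (i : ℕ) : YoungDiagram :=
  toYD (l.cells.erase (i, l.rowLen i - 1))

/-- The finset of upper covers of `l`. -/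
noncomputable def upF (l : YoungDiagram) : Finset YoungDiagram :=
  (upIdx l).image (upCell l)

/-- The finset of lower covers of `l`. -/
noncomputable def lowF (l : YoungDiagram) : Finset YoungDiagram :=
  (downIdx l).image (downCell l)

lemma addable_row_le {l : YoungDiagram} {i : ℕ}
    (hcond : i = 0 ∨ l.rowLen i < l.rowLen (i - 1)) : i ≤ l.colLen 0 := by
  rcases hcond with rfl | hcond
  · omega
  · have : (i - 1, 0) ∈ l := YoungDiagram.mem_iff_lt_rowLen.mpr (by omega)
    have := YoungDiagram.mem_iff_lt_colLen.mp this
    rcases Nat.eq_zero_or_pos i with rfl | hi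
    · omega
    · omega

lemma mem_upF {l m : YoungDiagram} : m ∈ upF l ↔ Cov l m := by
  constructor
  · rintro hm
    obtain ⟨i, hi, rfl⟩ := Finset.mem_image.mp hm
    rw [upIdx, Finset.mem_filter] at hi
    refine cov_up_iff.mpr ⟨i, hi.2, ?_⟩
    exact toYD_cells (isLowerSet_insert hi.2)
  · rintro h
    obtain ⟨i, hcond, hcells⟩ := cov_up_iff.mp h
    refine Finset.mem_image.mpr ⟨i, ?_, ?_⟩
    · rw [upIdx, Finset.mem_filter, Finset.mem_range]
      exact ⟨by have := addable_row_le hcond; omega, hcond⟩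
    · apply YoungDiagram.ext
      rw [upCell, toYD_cells (isLowerSet_insert hcond), hcells]

lemma removable_row_le {l : YoungDiagram} {i : ℕ}
    (hcond : l.rowLen (i + 1) < l.rowLen i) : i < l.colLen 0 := by
  have : (i, 0) ∈ l := YoungDiagram.mem_iff_lt_rowLen.mpr (by omega)
  exact YoungDiagram.mem_iff_lt_colLen.mp this

lemma mem_lowF {l p : YoungDiagram} : p ∈ lowF l ↔ Cov p l := by
  constructor
  · rintro hp
    obtain ⟨i, hi, rfl⟩ := Finset.mem_image.mp hp
    rw [downIdx, Finset.mem_filter] at hi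
    refine cov_down_iff.mpr ⟨i, hi.2, ?_⟩
    exact toYD_cells (isLowerSet_erase hi.2)
  · rintro h
    obtain ⟨i, hcond, hcells⟩ := cov_down_iff.mp h
    refine Finset.mem_image.mpr ⟨i, ?_, ?_⟩
    · rw [downIdx, Finset.mem_filter, Finset.mem_range]
      exact ⟨by have := removable_row_le hcond; omega, hcond⟩
    · apply YoungDiagram.ext
      rw [downCell, toYD_cells (isLowerSet_erase hcond), hcells]

/-- Key corner-count identity: one more addable corner than removable corners. -/
lemma card_upF (l : YoungDiagram) : (upF l).card = (lowF l).card + 1 := by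
  have hup : (upF l).card = (upIdx l).card := by
    apply Finset.card_image_of_injOn
    intro i hi j hj hij
    rw [Finset.mem_coe, upIdx, Finset.mem_filter] at hi hj
    by_contra hne
    have hicell : (i, l.rowLen i) ∈ (upCell l i).cells := by
      rw [upCell, toYD_cells (isLowerSet_insert hi.2)]; exact Finset.mem_insert_self _ _
    rw [hij, upCell, toYD_cells (isLowerSet_insert hj.2), Finset.mem_insert] at hicell
    rcases hicell with h | h
    · exact hne (congrArg Prod.fst h)
    · exact not_mem_rowLen l i ((YoungDiagram.mem_cells _).mp h)
  have hlow : (lowF l).card = (downIdx l).card := by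
    apply Finset.card_image_of_injOn
    intro i hi j hj hij
    rw [Finset.mem_coe, downIdx, Finset.mem_filter] at hi hj
    by_contra hne
    have hmem : (i, l.rowLen i - 1) ∈ l.cells :=
      (YoungDiagram.mem_cells _).mpr (YoungDiagram.mem_iff_lt_rowLen.mpr (by omega))
    have hicell : (i, l.rowLen i - 1) ∈ (downCell l j).cells := by
      rw [downCell, toYD_cells (isLowerSet_erase hj.2)]
      refine Finset.mem_erase.mpr ⟨?_, hmem⟩
      intro h
      exact hne (congrArg Prod.fst h)
    rw [← hij, downCell, toYD_cells (isLowerSet_erase hi.2), Finset.mem_erase] at hicell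
    exact hicell.1 rfl
  have hidx : (upIdx l).card = (downIdx l).card + 1 := by
    have h0 : 0 ∈ upIdx l := by
      rw [upIdx, Finset.mem_filter, Finset.mem_range]
      exact ⟨by omega, Or.inl rfl⟩
    have hbij : ((upIdx l).erase 0).card = (downIdx l).card := by
      apply Finset.card_bij (fun i _ => i - 1)
      · intro i hi
        rw [Finset.mem_erase, upIdx, Finset.mem_filter, Finset.mem_range] at hi
        obtain ⟨hne, hrange, hcond⟩ := hi
        rcases hcond with rfl | hcond
        · omega
        · rw [downIdx, Finset.mem_filter, Finset.mem_range]
          constructor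
          · omega
          · have : i - 1 + 1 = i := by omega
            rw [this]; exact hcond
      · intro i hi j hj hij
        rw [Finset.mem_erase] at hi hj
        omega
      · intro i hi
        rw [downIdx, Finset.mem_filter, Finset.mem_range] at hi
        refine ⟨i + 1, ?_, by omega⟩
        rw [Finset.mem_erase, upIdx, Finset.mem_filter, Finset.mem_range]
        have hcol : i < l.colLen 0 := removable_row_le hi.2
        refine ⟨by omega, by omega, Or.inr ?_⟩
        simpa using hi.2
    have := Finset.card_erase_add_one h0
    omega
  omega


lemma exists_mem_notmem {l m : YoungDiagram} (hne : l ≠ m) (hcard : l.card = m.card) :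
    ∃ x ∈ m.cells, x ∉ l.cells := by
  by_contra h
  push_neg at h
  have hsub : m.cells ⊆ l.cells := h
  have : m.cells = l.cells := Finset.eq_of_subset_of_card_le hsub (le_of_eq hcard)
  exact hne (YoungDiagram.ext this.symm)

lemma cov_cells_subset {l m : YoungDiagram} (h : Cov l m) : l.cells ⊆ m.cells :=
  YoungDiagram.cells_subset_iff.mpr h.1

/-- Common upper covers and common lower covers are equinumerous (for distinct
diagrams of the same size). -/
lemma common_card_eq {l m : YoungDiagram} (hne : l ≠ m) (hcard : l.card = m.card) :
    (upF l ∩ upF m).card = (lowF l ∩ lowF m).card := by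
  have hlc : l.card = l.cells.card := rfl
  have hmc : m.card = m.cells.card := rfl
  obtain ⟨x, hxm, hxl⟩ := exists_mem_notmem hne hcard
  obtain ⟨y, hyl, hym⟩ := exists_mem_notmem hne.symm hcard.symm
  -- the union has cardinality ≥ l.card + 1, intersection ≤ l.card - 1
  have hunion_lb : l.card + 1 ≤ (l.cells ∪ m.cells).card := by
    have hssub : l.cells ⊂ l.cells ∪ m.cells :=
      Finset.ssubset_iff_of_subset Finset.subset_union_left |>.mpr ⟨x, Finset.mem_union_right _ hxm, hxl⟩
    have := Finset.card_lt_card hssub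
    omega
  have hinter_ub : (l.cells ∩ m.cells).card + 1 ≤ l.card := by
    have hssub : l.cells ∩ m.cells ⊂ l.cells :=
      Finset.ssubset_iff_of_subset Finset.inter_subset_left |>.mpr
        ⟨y, hyl, fun hy => hym (Finset.mem_inter.mp hy).2⟩
    have := Finset.card_lt_card hssub
    omega
  have hie : (l.cells ∪ m.cells).card + (l.cells ∩ m.cells).card = l.card + m.card :=
    Finset.card_union_add_card_inter _ _
  -- subsingleton facts
  have hupsub : ∀ u ∈ upF l ∩ upF m, u.cells = l.cells ∪ m.cells := by
    intro u hu
    rw [Finset.mem_inter, mem_upF, mem_upF] at hu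
    have hsub : l.cells ∪ m.cells ⊆ u.cells :=
      Finset.union_subset (cov_cells_subset hu.1) (cov_cells_subset hu.2)
    have hcu : u.cells.card = l.card + 1 := hu.1.2
    exact (Finset.eq_of_subset_of_card_le hsub (by omega)).symm
  have hlowsub : ∀ p ∈ lowF l ∩ lowF m, p.cells = l.cells ∩ m.cells := by
    intro p hp
    rw [Finset.mem_inter, mem_lowF, mem_lowF] at hp
    have hsub : p.cells ⊆ l.cells ∩ m.cells :=
      Finset.subset_inter (cov_cells_subset hp.1) (cov_cells_subset hp.2)
    have hcp : l.card = p.cells.card + 1 := hp.1.2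
    exact Finset.eq_of_subset_of_card_le hsub (by omega)
  -- equivalence of nonemptiness
  have hupe : (upF l ∩ upF m).Nonempty ↔ (lowF l ∩ lowF m).Nonempty := by
    constructor
    · rintro ⟨u, hu⟩
      have hcells := hupsub u hu
      rw [Finset.mem_inter, mem_upF, mem_upF] at hu
      have hcu : u.cells.card = l.card + 1 := hu.1.2
      have hinter : l.card = (l.cells ∩ m.cells).card + 1 := by
        rw [hcells] at hcu; omega
      refine ⟨l ⊓ m, Finset.mem_inter.mpr ⟨mem_lowF.mpr ⟨inf_le_left, ?_⟩, mem_lowF.mpr ⟨inf_le_right, ?_⟩⟩⟩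
      · show l.cells.card = (l ⊓ m).cells.card + 1
        rw [YoungDiagram.cells_inf]; exact hinter
      · show m.cells.card = (l ⊓ m).cells.card + 1
        rw [YoungDiagram.cells_inf]
        have : (m.card : ℕ) = m.cells.card := rfl
        omega
    · rintro ⟨p, hp⟩
      have hcells := hlowsub p hp
      rw [Finset.mem_inter, mem_lowF, mem_lowF] at hp
      have hcp : l.card = p.cells.card + 1 := hp.1.2
      have hinter : (l.cells ∩ m.cells).card + 1 = l.card := by
        rw [hcells] at hcp; omega
      have hunion : (l.cells ∪ m.cells).card = l.card + 1 := by omega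
      refine ⟨l ⊔ m, Finset.mem_inter.mpr ⟨mem_upF.mpr ⟨le_sup_left, ?_⟩, mem_upF.mpr ⟨le_sup_right, ?_⟩⟩⟩
      · show (l ⊔ m).cells.card = l.cells.card + 1
        rw [YoungDiagram.cells_sup]; exact hunion
      · show (l ⊔ m).cells.card = m.cells.card + 1
        rw [YoungDiagram.cells_sup]
        have : (m.card : ℕ) = m.cells.card := rfl
        omega
  -- both intersections have card ≤ 1
  have hup1 : (upF l ∩ upF m).card ≤ 1 := by
    apply Finset.card_le_one.mpr
    intro a ha b hb
    exact YoungDiagram.ext ((hupsub a ha).trans (hupsub b hb).symm)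
  have hlow1 : (lowF l ∩ lowF m).card ≤ 1 := by
    apply Finset.card_le_one.mpr
    intro a ha b hb
    exact YoungDiagram.ext ((hlowsub a ha).trans (hlowsub b hb).symm)
  rcases Finset.eq_empty_or_nonempty (upF l ∩ upF m) with he | hne'
  · rw [he]
    have : lowF l ∩ lowF m = ∅ := by
      by_contra h
      exact absurd (hupe.mpr (Finset.nonempty_iff_ne_empty.mpr h)) (by simp [he])
    rw [this]
  · have h1 : 1 ≤ (upF l ∩ upF m).card := Finset.Nonempty.card_pos hne'
    have h2 : 1 ≤ (lowF l ∩ lowF m).card := Finset.Nonempty.card_pos (hupe.mp hne')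
    omega


lemma card_eq_zero_iff {l : YoungDiagram} : l.card = 0 ↔ l = ⊥ := by
  constructor
  · intro h
    apply YoungDiagram.ext
    rw [YoungDiagram.cells_bot]
    exact Finset.card_eq_zero.mp h
  · rintro rfl
    show (⊥ : YoungDiagram).cells.card = 0
    rw [YoungDiagram.cells_bot]; rfl

lemma lowF_bot : lowF (⊥ : YoungDiagram) = ∅ := by
  rw [Finset.eq_empty_iff_forall_notMem]
  intro p hp
  have := (mem_lowF.mp hp).2
  have hb : (⊥ : YoungDiagram).card = 0 := card_eq_zero_iff.mpr rfl
  omega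

lemma card_of_mem_lowF {l p : YoungDiagram} (h : p ∈ lowF l) : p.card + 1 = l.card :=
  (mem_lowF.mp h).2.symm

lemma card_of_mem_upF {l m : YoungDiagram} (h : m ∈ upF l) : m.card = l.card + 1 :=
  (mem_upF.mp h).2

/-- Number of standard Young tableaux (saturated chains from ⊥), via auxiliary depth. -/
noncomputable def fAux : ℕ → YoungDiagram → ℕ
  | 0, _ => 1
  | (k+1), l => ∑ p ∈ lowF l, fAux k p

noncomputable def fYD (l : YoungDiagram) : ℕ := fAux l.card l

lemma fYD_bot : fYD (⊥ : YoungDiagram) = 1 := by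
  rw [fYD, card_eq_zero_iff.mpr rfl]
  rfl

lemma fYD_eq_sum {l : YoungDiagram} (h : l ≠ ⊥) : fYD l = ∑ p ∈ lowF l, fYD p := by
  have hpos : 0 < l.card := by
    rcases Nat.eq_zero_or_pos l.card with h0 | h0
    · exact absurd (card_eq_zero_iff.mp h0) h
    · exact h0
  obtain ⟨k, hk⟩ : ∃ k, l.card = k + 1 := ⟨l.card - 1, by omega⟩
  rw [fYD, hk]
  show ∑ p ∈ lowF l, fAux k p = _
  apply Finset.sum_congr rfl
  intro p hp
  have : p.card = k := by have := card_of_mem_lowF hp; omega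
  rw [fYD, this]

/-- Generic double-counting swap. -/
lemma sum_sum_swap (s : Finset YoungDiagram) (t : YoungDiagram → Finset YoungDiagram)
    (g : YoungDiagram → ℕ) :
    ∑ m ∈ s, ∑ p ∈ t m, g p =
      ∑ p ∈ s.biUnion t, (s.filter (fun m => p ∈ t m)).card * g p := by
  have h1 : ∀ p, (s.filter (fun m => p ∈ t m)).card * g p =
      ∑ m ∈ s, (if p ∈ t m then g p else 0) := by
    intro p
    rw [Finset.card_filter, Finset.sum_mul]
    apply Finset.sum_congr rfl
    intro m _
    by_cases h : p ∈ t m <;> simp [h]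
  rw [Finset.sum_congr rfl (fun p _ => h1 p), Finset.sum_comm]
  apply Finset.sum_congr rfl
  intro m hm
  have hsub : t m ⊆ s.biUnion t := fun p hp => Finset.mem_biUnion.mpr ⟨m, hm, hp⟩
  rw [Finset.sum_ite_mem, Finset.inter_eq_right.mpr hsub]

lemma filter_upF_lowF (l p : YoungDiagram) :
    (upF l).filter (fun m => p ∈ lowF m) = upF l ∩ upF p := by
  ext m
  simp only [Finset.mem_filter, Finset.mem_inter, mem_lowF, mem_upF]

lemma filter_lowF_upF (l p : YoungDiagram) :
    (lowF l).filter (fun r => p ∈ upF r) = lowF l ∩ lowF p := by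
  ext r
  simp only [Finset.mem_filter, Finset.mem_inter, mem_upF, mem_lowF]

lemma card_of_mem_biUnion_lowF {l p : YoungDiagram} (h : p ∈ (upF l).biUnion lowF) :
    p.card = l.card := by
  obtain ⟨m, hm, hp⟩ := Finset.mem_biUnion.mp h
  have h1 := card_of_mem_upF hm
  have h2 := card_of_mem_lowF hp
  omega

lemma card_of_mem_biUnion_upF {l p : YoungDiagram} (h : p ∈ (lowF l).biUnion upF) :
    p.card = l.card := by
  obtain ⟨r, hr, hp⟩ := Finset.mem_biUnion.mp h
  have h1 := card_of_mem_lowF hr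
  have h2 := card_of_mem_upF hp
  omega

/-- Main counting identity in Young's lattice. -/
lemma sum_upF_fYD (l : YoungDiagram) : ∑ m ∈ upF l, fYD m = (l.card + 1) * fYD l := by
  generalize hn : l.card = n
  induction n using Nat.strong_induction_on generalizing l with
  | _ n IH =>
  subst hn
  set N := (upF l).biUnion lowF with hN
  -- first double counting
  have hS : ∑ m ∈ upF l, fYD m = ∑ p ∈ N, (upF l ∩ upF p).card * fYD p := by
    calc ∑ m ∈ upF l, fYD m = ∑ m ∈ upF l, ∑ p ∈ lowF m, fYD p := by
          apply Finset.sum_congr rfl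
          intro m hm
          have hmne : m ≠ ⊥ := by
            intro h
            have := card_of_mem_upF hm
            rw [h, card_eq_zero_iff.mpr rfl] at this
            omega
          exact fYD_eq_sum hmne
      _ = ∑ p ∈ N, ((upF l).filter (fun m => p ∈ lowF m)).card * fYD p :=
          sum_sum_swap _ _ _
      _ = ∑ p ∈ N, (upF l ∩ upF p).card * fYD p := by
          apply Finset.sum_congr rfl
          intro p _
          rw [filter_upF_lowF]
  -- l belongs to N (since upF l is nonempty)
  have hlN : l ∈ N := by
    have hne : (upF l).Nonempty := by
      rw [← Finset.card_pos, card_upF]; omega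
    obtain ⟨m, hm⟩ := hne
    exact Finset.mem_biUnion.mpr ⟨m, hm, mem_lowF.mpr (mem_upF.mp hm)⟩
  have hsplitS : ∑ m ∈ upF l, fYD m =
      (upF l).card * fYD l + ∑ p ∈ N.erase l, (lowF l ∩ lowF p).card * fYD p := by
    rw [hS, ← Finset.add_sum_erase _ _ hlN, Finset.inter_self]
    have heq : ∑ x ∈ N.erase l, (upF l ∩ upF x).card * fYD x
        = ∑ p ∈ N.erase l, (lowF l ∩ lowF p).card * fYD p := by
      apply Finset.sum_congr rfl
      intro p hp
      rw [common_card_eq (Finset.ne_of_mem_erase hp).symm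
        (card_of_mem_biUnion_lowF (Finset.mem_of_mem_erase hp)).symm]
    rw [heq]
  -- second double counting
  set N' := (lowF l).biUnion upF with hN'
  have hW : ∑ r ∈ lowF l, ∑ m ∈ upF r, fYD m = ∑ p ∈ N', (lowF l ∩ lowF p).card * fYD p := by
    calc ∑ r ∈ lowF l, ∑ m ∈ upF r, fYD m
        = ∑ p ∈ N', ((lowF l).filter (fun r => p ∈ upF r)).card * fYD p :=
          sum_sum_swap _ _ _
      _ = ∑ p ∈ N', (lowF l ∩ lowF p).card * fYD p := by
          apply Finset.sum_congr rfl
          intro p _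
          rw [filter_lowF_upF]
  have hWIH : ∑ r ∈ lowF l, ∑ m ∈ upF r, fYD m = l.card * ∑ r ∈ lowF l, fYD r := by
    rw [Finset.mul_sum]
    apply Finset.sum_congr rfl
    intro r hr
    have hrc := card_of_mem_lowF hr
    rw [IH r.card (by omega) r rfl, hrc]
  -- split W at l
  have hsplitW : ∑ p ∈ N', (lowF l ∩ lowF p).card * fYD p =
      (lowF l).card * fYD l + ∑ p ∈ N'.erase l, (lowF l ∩ lowF p).card * fYD p := by
    by_cases hl : l ∈ N'
    · rw [← Finset.add_sum_erase _ _ hl, Finset.inter_self]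
    · rw [Finset.erase_eq_of_notMem hl]
      have : lowF l = ∅ := by
        rw [Finset.eq_empty_iff_forall_notMem]
        intro r hr
        refine hl (Finset.mem_biUnion.mpr ⟨r, hr, mem_upF.mpr (mem_lowF.mp hr)⟩)
      rw [this]
      simp
  -- the two erased sums agree
  have herase : ∑ p ∈ N.erase l, (lowF l ∩ lowF p).card * fYD p =
      ∑ p ∈ N'.erase l, (lowF l ∩ lowF p).card * fYD p := by
    rw [← Finset.sum_filter_ne_zero, ← Finset.sum_filter_ne_zero (s := N'.erase l)]
    apply Finset.sum_congr
    · ext p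
      simp only [Finset.mem_filter, Finset.mem_erase]
      constructor
      · rintro ⟨⟨hpl, hpN⟩, hnz⟩
        have hnonempty : (lowF l ∩ lowF p).Nonempty := by
          rw [← Finset.card_pos]
          by_contra h
          push_neg at h
          rw [Nat.le_zero.mp h, Nat.zero_mul] at hnz
          exact hnz rfl
        obtain ⟨r, hr⟩ := hnonempty
        rw [Finset.mem_inter] at hr
        refine ⟨⟨hpl, Finset.mem_biUnion.mpr ⟨r, hr.1, mem_upF.mpr (mem_lowF.mp hr.2)⟩⟩, hnz⟩
      · rintro ⟨⟨hpl, hpN'⟩, hnz⟩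
        have hnonempty : (lowF l ∩ lowF p).Nonempty := by
          rw [← Finset.card_pos]
          by_contra h
          push_neg at h
          rw [Nat.le_zero.mp h, Nat.zero_mul] at hnz
          exact hnz rfl
        have hcards : l.card = p.card := (card_of_mem_biUnion_upF hpN').symm
        have hup : (upF l ∩ upF p).Nonempty := by
          rw [← Finset.card_pos, common_card_eq hpl.symm hcards]
          exact Finset.card_pos.mpr hnonempty
        obtain ⟨m, hm⟩ := hup
        rw [Finset.mem_inter] at hm
        refine ⟨⟨hpl, Finset.mem_biUnion.mpr ⟨m, hm.1, mem_lowF.mpr (mem_upF.mp hm.2)⟩⟩, hnz⟩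
    · intro p _
      rfl
  -- put it together
  by_cases hbot : l = ⊥
  · subst hbot
    rw [hsplitS, card_upF, lowF_bot]
    have h0 : (⊥ : YoungDiagram).card = 0 := card_eq_zero_iff.mpr rfl
    have hz : ∀ p ∈ N.erase ⊥, ((∅ : Finset YoungDiagram) ∩ lowF p).card * fYD p = 0 := by
      intro p _
      rw [Finset.empty_inter]
      simp
    rw [Finset.sum_congr rfl hz]
    simp [h0]
  · have hsum_low : ∑ r ∈ lowF l, fYD r = fYD l := (fYD_eq_sum hbot).symm
    have hkey : (lowF l).card * fYD l + ∑ p ∈ N'.erase l, (lowF l ∩ lowF p).card * fYD p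
        = l.card * fYD l := by
      rw [← hsplitW, ← hW, hWIH, hsum_low]
    rw [hsplitS, herase, card_upF]
    calc ((lowF l).card + 1) * fYD l + ∑ p ∈ N'.erase l, (lowF l ∩ lowF p).card * fYD p
        = ((lowF l).card * fYD l + ∑ p ∈ N'.erase l, (lowF l ∩ lowF p).card * fYD p)
            + fYD l := by ring
      _ = l.card * fYD l + fYD l := by rw [hkey]
      _ = (l.card + 1) * fYD l := by ring


/-- Number of perfect matchings of an `n`-element set. -/
def M : ℕ → ℕ
  | 0 => 1
  | 1 => 0
  | (n+2) => (n+1) * M n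

lemma M_two_add (m : ℕ) : M (m + 2) = (m + 1) * M m := rfl

lemma M_succ (n : ℕ) : M (n + 1) = n * M (n - 1) := by
  cases n with
  | zero => rfl
  | succ m => rw [M_two_add]; rfl

/-- One step in Young's lattice: add or remove a box. -/
def Step (l m : YoungDiagram) : Prop := Cov l m ∨ Cov m l

noncomputable def adjF (l : YoungDiagram) : Finset YoungDiagram := upF l ∪ lowF l

lemma mem_adjF {l m : YoungDiagram} : m ∈ adjF l ↔ Step l m := by
  rw [adjF, Finset.mem_union, mem_upF, mem_lowF, Step]

lemma disj_up_low (l : YoungDiagram) : Disjoint (upF l) (lowF l) := by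
  rw [Finset.disjoint_left]
  intro m hm hm'
  have h1 := (mem_upF.mp hm).2
  have h2 := (mem_lowF.mp hm').2
  omega

/-- Partial oscillating tableaux: sequences from `l` to `⊥` of length `n`. -/
def OTn (n : ℕ) (l : YoungDiagram) : Type :=
  {μ : Fin (n + 1) → YoungDiagram // μ 0 = l ∧ μ (Fin.last n) = ⊥ ∧
    ∀ i : Fin n, Step (μ i.castSucc) (μ i.succ)}

def e0 (l : YoungDiagram) : OTn 0 l ≃ PLift (l = ⊥) where
  toFun μ := ⟨μ.2.1.symm.trans μ.2.2.1⟩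
  invFun h := ⟨fun _ => ⊥, h.down.symm, rfl, fun i => i.elim0⟩
  left_inv μ := by
    apply Subtype.ext
    funext i
    show (⊥ : YoungDiagram) = μ.1 i
    have hi : i = 0 := Subsingleton.elim (α := Fin 1) i 0
    rw [hi, μ.2.1, μ.2.1.symm.trans μ.2.2.1]
  right_inv h := rfl

def consOT (n : ℕ) (l : YoungDiagram) (m : {m // Step l m}) (x : OTn n m.1) :
    OTn (n + 1) l := by
  rcases m with ⟨m, hm⟩
  rcases x with ⟨ν, h0, hl, hs⟩
  refine ⟨Fin.cons l ν, Fin.cons_zero _ _, ?_, ?_⟩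
  · show Fin.cons (α := fun _ => YoungDiagram) l ν (Fin.last (n+1)) = ⊥
    rw [← Fin.succ_last, Fin.cons_succ]
    exact hl
  · intro i
    induction i using Fin.cases with
    | zero =>
      show Step (Fin.cons (α := fun _ => YoungDiagram) l ν (Fin.castSucc 0)) (Fin.cons (α := fun _ => YoungDiagram) l ν (Fin.succ 0))
      rw [show (Fin.castSucc 0 : Fin (n+2)) = 0 from rfl, Fin.cons_zero, Fin.cons_succ]
      rw [h0]
      exact hm
    | succ j =>
      show Step (Fin.cons (α := fun _ => YoungDiagram) l ν (Fin.castSucc j.succ)) (Fin.cons (α := fun _ => YoungDiagram) l ν (Fin.succ j.succ))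
      rw [← Fin.succ_castSucc, Fin.cons_succ, Fin.cons_succ]
      exact hs j

def eS (n : ℕ) (l : YoungDiagram) :
    OTn (n + 1) l ≃ Σ m : {m // Step l m}, OTn n m where
  toFun μ :=
    ⟨⟨μ.1 (Fin.succ 0), by
        have := μ.2.2.2 0
        rwa [show (0 : Fin (n+1)).castSucc = 0 from rfl, μ.2.1] at this⟩,
      ⟨fun i => μ.1 i.succ, rfl, by
        show μ.1 (Fin.last n).succ = ⊥
        rw [Fin.succ_last]
        exact μ.2.2.1, by
        intro i
        have := μ.2.2.2 i.succ
        rwa [← Fin.succ_castSucc] at this⟩⟩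
  invFun x := consOT n l x.1 x.2
  left_inv μ := by
    apply Subtype.ext
    have hval : ∀ (m : {m // Step l m}) (x : OTn n m.1), (consOT n l m x).1 = Fin.cons (α := fun _ => YoungDiagram) l x.1 := by
      intro m x
      rcases m with ⟨m, hm⟩
      rcases x with ⟨ν, h0, hl, hs⟩
      rfl
    rw [hval]
    funext i
    induction i using Fin.cases with
    | zero =>
      show Fin.cons (α := fun _ => YoungDiagram) l (fun i => μ.1 i.succ) 0 = μ.1 0
      rw [Fin.cons_zero, μ.2.1]
    | succ j =>
      show Fin.cons (α := fun _ => YoungDiagram) l (fun i => μ.1 i.succ) j.succ = μ.1 j.succ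
      rw [Fin.cons_succ]
  right_inv x := by
    rcases x with ⟨⟨m, hm⟩, ⟨ν, h0, hl, hs⟩⟩
    apply Sigma.subtype_ext
    · apply Subtype.ext
      show Fin.cons (α := fun _ => YoungDiagram) l ν (Fin.succ 0) = m
      rw [Fin.cons_succ]
      exact h0
    · show (fun i => Fin.cons (α := fun _ => YoungDiagram) l ν i.succ) = ν
      funext i
      rw [Fin.cons_succ]

noncomputable def fintypeStep (l : YoungDiagram) : Fintype {m // Step l m} :=
  Fintype.subtype (adjF l) (fun _ => mem_adjF)

noncomputable def fintypeOTn : ∀ (n : ℕ) (l : YoungDiagram), Fintype (OTn n l)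
  | 0, l => Fintype.ofEquiv _ (e0 l).symm
  | (n+1), l =>
    letI := fintypeStep l
    letI := fun m : {m // Step l m} => fintypeOTn n m
    Fintype.ofEquiv _ (eS n l).symm

lemma finite_OTn (n : ℕ) (l : YoungDiagram) : Finite (OTn n l) :=
  letI := fintypeOTn n l
  Finite.of_fintype _

lemma card_OTn_zero (l : YoungDiagram) :
    Nat.card (OTn 0 l) = if l = ⊥ then 1 else 0 := by
  rw [Nat.card_congr (e0 l)]
  by_cases h : l = ⊥
  · rw [if_pos h]
    haveI : Unique (PLift (l = ⊥)) := ⟨⟨⟨h⟩⟩, fun a => rfl⟩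
    exact Nat.card_unique
  · rw [if_neg h]
    have : IsEmpty (PLift (l = ⊥)) := ⟨fun a => h a.down⟩
    exact Nat.card_of_isEmpty

lemma card_OTn_succ (n : ℕ) (l : YoungDiagram) :
    Nat.card (OTn (n+1) l) = ∑ m ∈ adjF l, Nat.card (OTn n m) := by
  rw [Nat.card_congr (eS n l)]
  letI := fintypeStep l
  letI := fun m : {m // Step l m} => fintypeOTn n m
  rw [Nat.card_eq_fintype_card, Fintype.card_sigma]
  have h1 : ∀ m : {m // Step l m}, Fintype.card (OTn n m.1) = Nat.card (OTn n m.1) := by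
    intro m
    rw [Nat.card_eq_fintype_card]
  rw [Finset.sum_congr rfl (fun m _ => h1 m)]
  exact (Finset.sum_subtype (adjF l) (fun _ => mem_adjF) (fun m => Nat.card (OTn n m))).symm


lemma key_arith (n k f : ℕ) :
    n.choose (k+2) * ((k+2) * f) * M (n - (k+2)) + n.choose k * f * M (n - k)
      = (n+1).choose (k+1) * f * M (n + 1 - (k+1)) := by
  have hp : (n+1).choose (k+1) = n.choose k + n.choose (k+1) := Nat.choose_succ_succ n k
  have h1 : n + 1 - (k + 1) = n - k := by omega
  rw [hp, h1]
  have hkey : n.choose (k+2) * ((k+2) * f) * M (n - (k+2)) = n.choose (k+1) * f * M (n - k) := by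
    have hc : n.choose (k+2) * (k+2) = n.choose (k+1) * (n - (k+1)) :=
      Nat.choose_succ_right_eq n (k+1)
    rcases Nat.lt_or_ge n (k+1) with hn | hn
    · have hz1 : n.choose (k+2) = 0 := Nat.choose_eq_zero_of_lt (by omega)
      have hz2 : n.choose (k+1) = 0 := Nat.choose_eq_zero_of_lt (by omega)
      rw [hz1, hz2]; ring
    · rcases Nat.eq_or_lt_of_le hn with he | hn2
      · -- n = k+1
        have hz1 : n.choose (k+2) = 0 := Nat.choose_eq_zero_of_lt (by omega)
        have hnk : n - k = 1 := by omega
        rw [hz1, hnk]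
        show 0 * ((k+2)*f) * M (n - (k+2)) = n.choose (k+1) * f * M 1
        rw [show M 1 = 0 from rfl]
        ring
      · -- n ≥ k + 2
        have hm : n - k = (n - (k+2)) + 2 := by omega
        rw [hm, M_two_add]
        have hmm : n - (k+2) + 1 = n - (k+1) := by omega
        rw [hmm]
        calc n.choose (k+2) * ((k+2) * f) * M (n - (k+2))
            = (n.choose (k+2) * (k+2)) * f * M (n - (k+2)) := by ring
          _ = (n.choose (k+1) * (n - (k+1))) * f * M (n - (k+2)) := by rw [hc]
          _ = n.choose (k+1) * f * ((n - (k+1)) * M (n - (k+2))) := by ring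
  rw [hkey]
  ring

/-- The hook walk counting formula. -/
lemma card_OTn (n : ℕ) (l : YoungDiagram) :
    Nat.card (OTn n l) = n.choose l.card * fYD l * M (n - l.card) := by
  induction n generalizing l with
  | zero =>
    rw [card_OTn_zero]
    by_cases h : l = ⊥
    · rw [if_pos h, h, card_eq_zero_iff.mpr rfl, fYD_bot]
      rfl
    · rw [if_neg h]
      have : l.card ≠ 0 := fun hc => h (card_eq_zero_iff.mp hc)
      obtain ⟨k, hk⟩ : ∃ k, l.card = k + 1 := ⟨l.card - 1, by omega⟩
      rw [hk, Nat.choose_zero_succ]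
      ring
  | succ n IH =>
    rw [card_OTn_succ, adjF, Finset.sum_union (disj_up_low l)]
    have hup : ∑ m ∈ upF l, Nat.card (OTn n m)
        = n.choose (l.card + 1) * ((l.card + 1) * fYD l) * M (n - (l.card + 1)) := by
      have : ∀ m ∈ upF l, Nat.card (OTn n m)
          = n.choose (l.card + 1) * fYD m * M (n - (l.card + 1)) := by
        intro m hm
        rw [IH m, (mem_upF.mp hm).2]
      rw [Finset.sum_congr rfl this]
      rw [← Finset.sum_mul, ← Finset.mul_sum, sum_upF_fYD]
    rw [hup]
    by_cases h : l = ⊥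
    · subst h
      rw [lowF_bot, Finset.sum_empty, card_eq_zero_iff.mpr rfl, fYD_bot]
      simp only [Nat.sub_zero, Nat.choose_zero_right, Nat.choose_one_right, Nat.add_sub_cancel]
      rw [M_succ n, Nat.choose_one_right]
      ring
    · obtain ⟨k, hk⟩ : ∃ k, l.card = k + 1 := ⟨l.card - 1, by
        have : l.card ≠ 0 := fun hc => h (card_eq_zero_iff.mp hc); omega⟩
      have hlow : ∑ m ∈ lowF l, Nat.card (OTn n m)
          = n.choose k * fYD l * M (n - k) := by
        have hc : ∀ m ∈ lowF l, Nat.card (OTn n m)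
            = n.choose k * fYD m * M (n - k) := by
          intro m hm
          have := (mem_lowF.mp hm).2
          have hmk : m.card = k := by omega
          rw [IH m, hmk]
        rw [Finset.sum_congr rfl hc, ← Finset.sum_mul, ← Finset.mul_sum,
          ← fYD_eq_sum h]
      rw [hlow, hk]
      exact key_arith n k (fYD l)


/-- Fixed-point-free involutions of a type. -/
def Fpf (α : Type) : Type := {π : Equiv.Perm α // π * π = 1 ∧ ∀ i, π i ≠ i}

lemma invol_apply {β : Type*} {π : Equiv.Perm β} (h : π * π = 1) (x : β) : π (π x) = x := by
  have h1 : (π * π) x = (1 : Equiv.Perm β) x := by rw [h]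
  simpa using h1

noncomputable instance fintypeFpf (α : Type) [Fintype α] [DecidableEq α] : Fintype (Fpf α) :=
  Subtype.fintype _

/-- The function swapping `a`, `b` and acting as `σ` elsewhere. -/
noncomputable def gfun {α : Type} [DecidableEq α] (a b : α)
    (σ : Equiv.Perm {x : α // x ≠ a ∧ x ≠ b}) : α → α := fun x =>
  if hxa : x = a then b else if hxb : x = b then a else (σ ⟨x, hxa, hxb⟩).1

lemma gfun_a {α : Type} [DecidableEq α] (a b : α)
    (σ : Equiv.Perm {x : α // x ≠ a ∧ x ≠ b}) : gfun a b σ a = b := by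
  rw [gfun, dif_pos rfl]

lemma gfun_b {α : Type} [DecidableEq α] {a b : α} (hba : b ≠ a)
    (σ : Equiv.Perm {x : α // x ≠ a ∧ x ≠ b}) : gfun a b σ b = a := by
  rw [gfun, dif_neg hba, dif_pos rfl]

lemma gfun_other {α : Type} [DecidableEq α] {a b x : α} (hxa : x ≠ a) (hxb : x ≠ b)
    (σ : Equiv.Perm {x : α // x ≠ a ∧ x ≠ b}) : gfun a b σ x = (σ ⟨x, hxa, hxb⟩).1 := by
  rw [gfun, dif_neg hxa, dif_neg hxb]

lemma gfun_invol {α : Type} [DecidableEq α] {a b : α} (hba : b ≠ a)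
    {σ : Equiv.Perm {x : α // x ≠ a ∧ x ≠ b}} (hσ : σ * σ = 1) :
    Function.Involutive (gfun a b σ) := by
  intro x
  by_cases hxa : x = a
  · subst hxa
    rw [gfun_a, gfun_b hba]
  · by_cases hxb : x = b
    · subst hxb
      rw [gfun_b hba, gfun_a]
    · rw [gfun_other hxa hxb]
      have hmem := (σ ⟨x, hxa, hxb⟩).2
      rw [gfun_other hmem.1 hmem.2]
      have h1 : (⟨(σ ⟨x, hxa, hxb⟩).1, hmem⟩ : {x : α // x ≠ a ∧ x ≠ b}) = σ ⟨x, hxa, hxb⟩ :=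
        Subtype.ext rfl
      rw [h1]
      have h2 := invol_apply hσ (⟨x, hxa, hxb⟩ : {x : α // x ≠ a ∧ x ≠ b})
      rw [h2]

/-- The fiber equivalence: fpf involutions with `π a = b` correspond to fpf involutions
of the complement of `{a, b}`. -/
noncomputable def fiberEquiv (α : Type) [Fintype α] [DecidableEq α] (a b : α) (hba : b ≠ a) :
    {π : Fpf α // π.1 a = b} ≃ Fpf {x : α // x ≠ a ∧ x ≠ b} where
  toFun π := by
    rcases π with ⟨⟨π, hπ2, hfpf⟩, hab⟩
    refine ⟨Function.Involutive.toPerm (fun x => ⟨π x.1, ?_, ?_⟩) ?_, ?_, ?_⟩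
    · intro h
      have h2 : x.1 = b := by rw [← invol_apply hπ2 x.1, h, hab]
      exact x.2.2 h2
    · intro h
      have h2 : π x.1 = π a := h.trans hab.symm
      exact x.2.1 (π.injective h2)
    · intro x
      exact Subtype.ext (invol_apply hπ2 x.1)
    · apply Equiv.ext
      intro x
      exact Subtype.ext (invol_apply hπ2 x.1)
    · intro x h
      exact hfpf x.1 (congrArg Subtype.val h)
  invFun σ := by
    rcases σ with ⟨σ, hσ2, hσf⟩
    refine ⟨⟨(gfun_invol hba hσ2).toPerm, ?_, ?_⟩, ?_⟩
    · apply Equiv.ext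
      intro x
      exact gfun_invol hba hσ2 x
    · intro x
      show gfun a b σ x ≠ x
      by_cases hxa : x = a
      · subst hxa; rw [gfun_a]; exact hba
      · by_cases hxb : x = b
        · subst hxb; rw [gfun_b hba]
          exact fun h => hba h.symm
        · rw [gfun_other hxa hxb]
          intro h
          exact hσf ⟨x, hxa, hxb⟩ (Subtype.ext h)
    · show gfun a b σ a = b
      rw [gfun_a]
  left_inv := by
    rintro ⟨⟨π, hπ2, hfpf⟩, hab⟩
    apply Subtype.ext
    apply Subtype.ext
    apply Equiv.ext
    intro x
    show gfun a b _ x = π x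
    by_cases hxa : x = a
    · subst hxa; rw [gfun_a]; exact hab.symm
    · by_cases hxb : x = b
      · subst hxb
        rw [gfun_b hba, ← hab, invol_apply hπ2]
      · rw [gfun_other hxa hxb]
        rfl
  right_inv := by
    rintro ⟨σ, hσ2, hσf⟩
    apply Subtype.ext
    apply Equiv.ext
    intro x
    apply Subtype.ext
    show gfun a b σ x.1 = (σ x).1
    rw [gfun_other x.2.1 x.2.2]

lemma card_fpf : ∀ (n : ℕ) (α : Type) [Fintype α] [DecidableEq α],
    Fintype.card α = n → Even n → Nat.card (Fpf α) = M n := by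
  intro n
  induction n using Nat.strong_induction_on with
  | _ n IH =>
  intro α _ _ hcard heven
  match n, heven with
  | 1, heven => exact absurd heven (by decide)
  | 0, _ =>
    haveI : IsEmpty α := Fintype.card_eq_zero_iff.mp hcard
    haveI : Unique (Fpf α) := by
      refine ⟨⟨⟨1, ?_, fun i => isEmptyElim i⟩⟩, ?_⟩
      · simp
      · rintro ⟨π, hπ⟩
        apply Subtype.ext
        apply Equiv.ext
        intro x
        exact isEmptyElim x
    exact Nat.card_unique
  | (m+2), heven =>
    have hm : Even m := by
      rcases heven with ⟨k, hk⟩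
      exact ⟨k - 1, by omega⟩
    have hpos : 0 < Fintype.card α := by omega
    obtain ⟨a⟩ : Nonempty α := Fintype.card_pos_iff.mp hpos
    -- partition by the image of a
    have hsig : Nat.card (Fpf α) = ∑ b : α, Nat.card {π : Fpf α // π.1 a = b} := by
      rw [← Nat.card_congr (Equiv.sigmaFiberEquiv (fun π : Fpf α => π.1 a))]
      letI : ∀ b : α, Fintype {π : Fpf α // π.1 a = b} := fun b => Subtype.fintype _
      rw [Nat.card_eq_fintype_card, Fintype.card_sigma]
      apply Finset.sum_congr rfl
      intro b _
      rw [Nat.card_eq_fintype_card]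
    rw [hsig]
    have hval : ∀ b : α, Nat.card {π : Fpf α // π.1 a = b} = if b = a then 0 else M m := by
      intro b
      by_cases hb : b = a
      · subst hb
        rw [if_pos rfl]
        haveI : IsEmpty {π : Fpf α // π.1 b = b} := ⟨fun π => π.1.2.2 b π.2⟩
        exact Nat.card_of_isEmpty
      · rw [if_neg hb]
        rw [Nat.card_congr (fiberEquiv α a b hb)]
        have hcard2 : Fintype.card {x : α // x ≠ a ∧ x ≠ b} = m := by
          rw [Fintype.card_subtype]
          have : Finset.filter (fun x => x ≠ a ∧ x ≠ b) Finset.univ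
              = (Finset.univ.erase a).erase b := by
            ext x
            simp [Finset.mem_erase, and_comm]
          rw [this, Finset.card_erase_of_mem, Finset.card_erase_of_mem]
          · rw [Finset.card_univ, hcard]
            omega
          · exact Finset.mem_univ a
          · exact Finset.mem_erase.mpr ⟨hb, Finset.mem_univ b⟩
        exact IH m (by omega) _ hcard2 hm
    rw [Finset.sum_congr rfl (fun b _ => hval b)]
    rw [Finset.sum_ite]
    rw [Finset.sum_const, Finset.sum_const]
    have h1 : (Finset.univ.filter (fun b : α => b = a)).card = 1 := by
      rw [Finset.filter_eq']
      simp
    have h2 : (Finset.univ.filter (fun b : α => ¬ b = a)).card = m + 1 := by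
      have : Finset.univ.filter (fun b : α => ¬ b = a) = Finset.univ.erase a := by
        ext x; simp [Finset.mem_erase]
      rw [this, Finset.card_erase_of_mem (Finset.mem_univ a), Finset.card_univ, hcard]
      omega
    rw [h1, h2]
    show 1 * 0 + (m+1) * M m = M (m + 2)
    rw [show M (m+2) = (m+1) * M m from rfl]
    omega


end OscProof

/-- For n even there is a bijection between fixed-point-free involutions of S_n and
oscillating tableaux of length n. -/
theorem fpf_involutions_equiv_oscillating (n : ℕ) (hn : Even n) :
    Nonempty ({π : Equiv.Perm (Fin n) // π * π = 1 ∧ ∀ i, π i ≠ i} ≃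
      {μ : Fin (n + 1) → YoungDiagram // IsOscillatingTableau n μ}) := by
  open OscProof in
  have eB : {μ : Fin (n + 1) → YoungDiagram // IsOscillatingTableau n μ} ≃ OTn n ⊥ :=
    Equiv.subtypeEquivRight (fun μ => Iff.rfl)
  have hA : Nat.card {π : Equiv.Perm (Fin n) // π * π = 1 ∧ ∀ i, π i ≠ i} = M n :=
    card_fpf n (Fin n) (Fintype.card_fin n) hn
  have hB : Nat.card {μ : Fin (n + 1) → YoungDiagram // IsOscillatingTableau n μ} = M n := by
    rw [Nat.card_congr eB, card_OTn]
    rw [card_eq_zero_iff.mpr rfl, fYD_bot, Nat.choose_zero_right, Nat.sub_zero]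
    ring
  haveI : Finite (OTn n ⊥) := finite_OTn n ⊥
  haveI : Finite {μ : Fin (n + 1) → YoungDiagram // IsOscillatingTableau n μ} :=
    Finite.of_equiv _ eB.symm
  letI fA : Fintype {π : Equiv.Perm (Fin n) // π * π = 1 ∧ ∀ i, π i ≠ i} := Fintype.ofFinite _
  letI fB : Fintype {μ : Fin (n + 1) → YoungDiagram // IsOscillatingTableau n μ} :=
    Fintype.ofFinite _
  apply Fintype.card_eq.mp
  rw [← Nat.card_eq_fintype_card, ← Nat.card_eq_fintype_card, hA, hB]
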